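/- Assume Δ ≠ 0 and DX ≠ 0. Then q ∈ K^m satisfies the m equations DX·DDY^j − DY^j·DDX = 0 (j = 1, …, m) if and only if, for every j ∈ {1, …, m}: 0 = q^j·Δ + Δ(⋯|^j xx|⋯) + Σ_{l₁=1}^m p^{l₁}·( 2Δ(⋯|^j x y^{l₁}|⋯) − δ^j_{l₁}·Δ(⋯|⁰ xx|⋯) ) + Σ_{l₁=1}^m Σ_{l₂=1}^m p^{l₁}p^{l₂}·( Δ(⋯|^j y^{l₁}y^{l₂}|⋯) − 2δ^j_{l₁}·Δ(⋯|⁰ x y^{l₂}|⋯) ) − Σ_{l₁=1}^m Σ_{l₂=1}^m Σ_{l₃=1}^m p^{l₁}p^{l₂}p^{l₃}·δ^j_{l₁}·Δ(⋯|⁰ y^{l₂}y^{l₃}|⋯), where δ is the Kronecker delta. -/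

import Mathlib

namespace Stmt8

variable {K : Type*} [Field K]

/-- Extended jet coordinates `(p⁰, p¹, …, p^m)` with the convention `p⁰ = 1`. -/
def pp (m : ℕ) (p : Fin m → K) : Fin (m + 1) → K := Fin.cons 1 p

/-- `DX = Σ_{l=0}^m p^l X_{y^l}`. -/
def DX (m : ℕ) (a : Fin (m + 1) → K) (p : Fin m → K) : K :=
  ∑ l : Fin (m + 1), pp m p l * a l

/-- `DDX = Σ_{l₁,l₂=0}^m p^{l₁}p^{l₂} X_{y^{l₁}y^{l₂}} + Σ_{l=1}^m q^l X_{y^l}`. -/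
def DDX (m : ℕ) (a : Fin (m + 1) → K) (A2 : Fin (m + 1) → Fin (m + 1) → K)
    (p q : Fin m → K) : K :=
  (∑ l₁ : Fin (m + 1), ∑ l₂ : Fin (m + 1), pp m p l₁ * pp m p l₂ * A2 l₁ l₂)
    + ∑ l : Fin m, q l * a l.succ

/-- The fundamental determinant `Δ`, whose row `0` is `(X_{y⁰}, …, X_{y^m})` and
whose row `j+1` is `(Y^{j+1}_{y⁰}, …, Y^{j+1}_{y^m})`. -/
def Δfund (m : ℕ) (a : Fin (m + 1) → K) (b : Fin m → Fin (m + 1) → K) : K :=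
  (Matrix.of (Fin.cons a b : Fin (m + 1) → Fin (m + 1) → K)).det

/-- The determinant `Δ(⋯|^k y^{l₁}y^{l₂}|⋯)`, obtained from `Δ` by replacing its
`k`-th column by the column of second-jet values with lower indices `(l₁, l₂)`. -/
def Δrep (m : ℕ) (a : Fin (m + 1) → K) (b : Fin m → Fin (m + 1) → K)
    (A2 : Fin (m + 1) → Fin (m + 1) → K) (B2 : Fin m → Fin (m + 1) → Fin (m + 1) → K)
    (k l₁ l₂ : Fin (m + 1)) : K :=
  (Matrix.of fun i j =>
    if j = k then (Fin.cons (A2 l₁ l₂) (fun r => B2 r l₁ l₂) : Fin (m + 1) → K) i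
    else (Fin.cons a b : Fin (m + 1) → Fin (m + 1) → K) i j).det

/-- Solving the equations `DX·DDY^j − DY^j·DDX = 0` for the second-order jet:
they hold if and only if each `q^j` satisfies the explicit determinantal cubic
expression in `p`. -/
theorem solve_second_jet (m : ℕ) (hm : 1 ≤ m)
    (a : Fin (m + 1) → K) (b : Fin m → Fin (m + 1) → K)
    (A2 : Fin (m + 1) → Fin (m + 1) → K)
    (B2 : Fin m → Fin (m + 1) → Fin (m + 1) → K)
    (hA2 : ∀ l₁ l₂, A2 l₁ l₂ = A2 l₂ l₁)
    (hB2 : ∀ j l₁ l₂, B2 j l₁ l₂ = B2 j l₂ l₁)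
    (p : Fin m → K)
    (hΔ : Δfund m a b ≠ 0) (hDX : DX m a p ≠ 0) (q : Fin m → K) :
    (∀ j : Fin m,
        DX m a p * DDX m (b j) (B2 j) p q - DX m (b j) p * DDX m a A2 p q = 0)
    ↔
    (∀ j : Fin m,
      (0 : K) = q j * Δfund m a b + Δrep m a b A2 B2 j.succ 0 0
        + ∑ l₁ : Fin m, p l₁ *
            (2 * Δrep m a b A2 B2 j.succ 0 l₁.succ
              - (if l₁ = j then 1 else 0) * Δrep m a b A2 B2 0 0 0)
        + ∑ l₁ : Fin m, ∑ l₂ : Fin m, p l₁ * p l₂ *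
            (Δrep m a b A2 B2 j.succ l₁.succ l₂.succ
              - 2 * (if l₁ = j then 1 else 0) * Δrep m a b A2 B2 0 0 l₂.succ)
        - ∑ l₁ : Fin m, ∑ l₂ : Fin m, ∑ l₃ : Fin m,
            p l₁ * p l₂ * p l₃ * (if l₁ = j then 1 else 0) *
              Δrep m a b A2 B2 0 l₂.succ l₃.succ) := by
  classical
  set M : Matrix (Fin (m + 1)) (Fin (m + 1)) K :=
    Matrix.of (Fin.cons a b : Fin (m + 1) → Fin (m + 1) → K) with hM
  set π : Fin (m + 1) → K := pp m p with hπ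
  set col : Fin (m + 1) → Fin (m + 1) → Fin (m + 1) → K :=
    fun l₁ l₂ => Fin.cons (A2 l₁ l₂) (fun r => B2 r l₁ l₂) with hcol
  set D : Fin (m + 1) → Fin (m + 1) → Fin (m + 1) → K := Δrep m a b A2 B2 with hDdef
  have hD : ∀ k l₁ l₂, D k l₁ l₂ = M.cramer (col l₁ l₂) k := by
    intro k l₁ l₂
    rw [Matrix.cramer_apply]
    show Δrep m a b A2 B2 k l₁ l₂ = _
    unfold Δrep
    congr 1
    ext i jx
    simp [Matrix.updateCol_apply, hM, hcol]
  have hsymm : ∀ k l₁ l₂, D k l₁ l₂ = D k l₂ l₁ := by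
    intro k l₁ l₂
    have hcc : col l₁ l₂ = col l₂ l₁ := by
      funext i
      induction i using Fin.cases with
      | zero => simp [hcol, hA2]
      | succ i => simp [hcol, hB2]
    rw [hD, hD, hcc]
  set V2 : Fin (m + 1) → K := fun i => ∑ l₁ : Fin (m + 1), ∑ l₂ : Fin (m + 1),
      π l₁ * π l₂ * col l₁ l₂ i with hV2
  set C : Fin (m + 1) → K := fun k => ∑ l₁ : Fin (m + 1), ∑ l₂ : Fin (m + 1),
      π l₁ * π l₂ * D k l₁ l₂ with hCdef
  have hCcr : C = M.cramer V2 := by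
    have hsum : V2 = ∑ l₁ : Fin (m + 1), ∑ l₂ : Fin (m + 1),
        (π l₁ * π l₂) • col l₁ l₂ := by
      funext i
      simp [hV2, Finset.sum_apply]
    funext k
    rw [hsum, map_sum]
    simp only [map_sum, map_smul, Finset.sum_apply, Pi.smul_apply, smul_eq_mul]
    simp [hCdef, hD]
  have hMulC : M.mulVec C = fun k => Δfund m a b * V2 k := by
    rw [hCcr]
    funext k
    rw [Matrix.mulVec_cramer]
    simp [Δfund, hM, mul_comm]
  -- auxiliary vectors
  set qq : Fin (m + 1) → K := Fin.cons 0 q with hqq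
  set t : Fin (m + 1) → K := fun k => C k + Δfund m a b * qq k with ht
  set v : Fin (m + 1) → K :=
    Fin.cons (DDX m a A2 p q) (fun j => DDX m (b j) (B2 j) p q) with hv
  set w : Fin (m + 1) → K := M.mulVec π with hw
  have e1 : ∀ (c : K) (x : Fin (m + 1) → K) (k : Fin (m + 1)),
      M.mulVec (fun l => c * x l) k = c * M.mulVec x k := by
    intro c x k
    simp [Matrix.mulVec, dotProduct, Finset.mul_sum, mul_left_comm]
  have hw0 : w 0 = DX m a p := by
    simp [hw, Matrix.mulVec, dotProduct, DX, hM, hπ, mul_comm]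
  have hws : ∀ j : Fin m, w j.succ = DX m (b j) p := by
    intro j
    simp [hw, Matrix.mulVec, dotProduct, DX, hM, hπ, mul_comm]
  have hMq : ∀ k, M.mulVec qq k = ∑ l : Fin m, q l * M k l.succ := by
    intro k
    simp [Matrix.mulVec, dotProduct, Fin.sum_univ_succ, hqq, mul_comm]
  have hMt : ∀ k, M.mulVec t k = Δfund m a b * v k := by
    intro k
    have expand : M.mulVec t k = M.mulVec C k + Δfund m a b * M.mulVec qq k := by
      simp [Matrix.mulVec, dotProduct, ht, mul_add, Finset.sum_add_distrib,
        Finset.mul_sum, mul_left_comm]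
    rw [expand, congrFun hMulC k, hMq, ← mul_add]
    congr 1
    induction k using Fin.cases with
    | zero =>
      simp [hv, DDX, hV2, hcol, hM, hπ, mul_comm]
    | succ i =>
      simp [hv, DDX, hV2, hcol, hM, hπ, mul_comm]
  have hcancel : ∀ x y : Fin (m + 1) → K, M.mulVec x = M.mulVec y → x = y := by
    intro x y hxy
    have h1 := congrArg (fun z => (Matrix.adjugate M).mulVec z) hxy
    simp only [Matrix.mulVec_mulVec, Matrix.adjugate_mul, Matrix.smul_mulVec,
      Matrix.one_mulVec] at h1
    have hd : M.det ≠ 0 := hΔ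
    funext k
    have := congrFun h1 k
    simp only [Pi.smul_apply, smul_eq_mul] at this
    exact mul_left_cancel₀ hd this
  -- the middle characterization
  have key : (∀ j : Fin m,
      DX m a p * DDX m (b j) (B2 j) p q - DX m (b j) p * DDX m a A2 p q = 0)
      ↔ (∀ j : Fin m, Δfund m a b * q j = p j * C 0 - C j.succ) := by
    constructor
    · intro h j
      have hvw : ∀ k, w 0 * v k = v 0 * w k := by
        intro k
        induction k using Fin.cases with
        | zero => ring
        | succ i =>
          have := h i
          rw [← hw0, ← hws i] at this
          simp only [hv, Fin.cons_succ, Fin.cons_zero]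
          linear_combination this
      have hMeq : M.mulVec (fun k => w 0 * t k) = M.mulVec (fun k => v 0 * Δfund m a b * π k) := by
        funext k
        rw [e1, e1, hMt k, ← hw]
        linear_combination Δfund m a b * hvw k
      have heq := hcancel _ _ hMeq
      have h0 := congrFun heq 0
      have hj := congrFun heq j.succ
      simp only [ht, hqq, hπ, pp, Fin.cons_zero, Fin.cons_succ, mul_zero, mul_one,
        add_zero] at h0 hj
      -- h0 : w 0 * C 0 = v 0 * Δfund m a b
      -- hj : w 0 * (C j.succ + Δ * q j) = v 0 * Δ * p j
      have hw0ne : w 0 ≠ 0 := by rw [hw0]; exact hDX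
      apply mul_left_cancel₀ hw0ne
      calc w 0 * (Δfund m a b * q j)
          = w 0 * (C j.succ + Δfund m a b * q j) - w 0 * C j.succ := by ring
        _ = v 0 * Δfund m a b * p j - w 0 * C j.succ := by rw [hj]
        _ = (w 0 * C 0) * p j - w 0 * C j.succ := by rw [← h0]
        _ = w 0 * (p j * C 0 - C j.succ) := by ring
    · intro h j
      have htt : ∀ k, t k = C 0 * π k := by
        intro k
        induction k using Fin.cases with
        | zero => simp [ht, hqq, hπ, pp]
        | succ i =>
          have := h i
          simp only [ht, hqq, hπ, pp, Fin.cons_succ]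
          linear_combination this
      have hvw : ∀ k, Δfund m a b * v k = C 0 * w k := by
        intro k
        rw [← hMt k]
        have : t = fun l => C 0 * π l := funext htt
        rw [this, e1, ← hw]
      have h1 := hvw j.succ
      have h0 := hvw 0
      simp only [hv, Fin.cons_succ, Fin.cons_zero] at h1 h0
      have : Δfund m a b * (DX m a p * DDX m (b j) (B2 j) p q
          - DX m (b j) p * DDX m a A2 p q) = 0 := by
        rw [← hw0, ← hws j]
        linear_combination w 0 * h1 - w j.succ * h0
      exact (mul_eq_zero.mp this).resolve_left hΔ
  rw [key]
  -- now the determinant/Kronecker bookkeeping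
  have hCk : ∀ k, C k = D k 0 0 + 2 * (∑ l : Fin m, p l * D k 0 l.succ)
      + ∑ l₁ : Fin m, ∑ l₂ : Fin m, p l₁ * p l₂ * D k l₁.succ l₂.succ := by
    intro k
    have hmix : ∑ l₁ : Fin m, p l₁ * D k l₁.succ 0 = ∑ l : Fin m, p l * D k 0 l.succ := by
      exact Finset.sum_congr rfl fun l _ => by rw [hsymm]
    simp only [hCdef, hπ, pp, Fin.sum_univ_succ, Fin.cons_zero, Fin.cons_succ, one_mul,
      mul_one, Finset.sum_add_distrib]
    rw [hmix]
    ring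
  apply forall_congr'
  intro j
  have hδ1 : ∑ l₁ : Fin m, p l₁ * ((if l₁ = j then (1:K) else 0) * D 0 0 0)
      = p j * D 0 0 0 := by
    simp [mul_ite, ite_mul, mul_zero, zero_mul, mul_one]
  have hδ2 : ∑ l₁ : Fin m, ∑ l₂ : Fin m, p l₁ * p l₂ *
      (2 * (if l₁ = j then (1:K) else 0) * D 0 0 l₂.succ)
      = 2 * p j * ∑ l₂ : Fin m, p l₂ * D 0 0 l₂.succ := by
    rw [Finset.sum_comm]
    rw [Finset.mul_sum]
    refine Finset.sum_congr rfl fun l₂ _ => ?_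
    simp [mul_ite, ite_mul, mul_zero, zero_mul, mul_one, Finset.mul_sum]
    ring_nf
  have hδ3 : ∑ l₁ : Fin m, ∑ l₂ : Fin m, ∑ l₃ : Fin m,
      p l₁ * p l₂ * p l₃ * (if l₁ = j then (1:K) else 0) * D 0 l₂.succ l₃.succ
      = p j * ∑ l₂ : Fin m, ∑ l₃ : Fin m, p l₂ * p l₃ * D 0 l₂.succ l₃.succ := by
    rw [Finset.mul_sum]
    rw [Finset.sum_comm]
    refine Finset.sum_congr rfl fun l₂ _ => ?_
    rw [Finset.mul_sum, Finset.sum_comm]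
    refine Finset.sum_congr rfl fun l₃ _ => ?_
    simp [mul_ite, ite_mul, mul_zero, zero_mul, mul_one]
    ring
  have hsub1 : ∑ l₁ : Fin m, p l₁ * (2 * D j.succ 0 l₁.succ
      - (if l₁ = j then (1:K) else 0) * D 0 0 0)
      = 2 * (∑ l : Fin m, p l * D j.succ 0 l.succ) - p j * D 0 0 0 := by
    rw [← hδ1, Finset.mul_sum, ← Finset.sum_sub_distrib]
    refine Finset.sum_congr rfl fun l _ => by ring
  have hsub2 : ∑ l₁ : Fin m, ∑ l₂ : Fin m, p l₁ * p l₂ *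
      (D j.succ l₁.succ l₂.succ - 2 * (if l₁ = j then (1:K) else 0) * D 0 0 l₂.succ)
      = (∑ l₁ : Fin m, ∑ l₂ : Fin m, p l₁ * p l₂ * D j.succ l₁.succ l₂.succ)
        - 2 * p j * ∑ l₂ : Fin m, p l₂ * D 0 0 l₂.succ := by
    rw [← hδ2, ← Finset.sum_sub_distrib]
    refine Finset.sum_congr rfl fun l₁ _ => ?_
    rw [← Finset.sum_sub_distrib]
    refine Finset.sum_congr rfl fun l₂ _ => by ring
  show _ ↔ (0 : K) = q j * Δfund m a b + D j.succ 0 0 + _ + _ - _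
  rw [hsub1, hsub2, hδ3, hCk j.succ, hCk 0]
  constructor <;> intro h <;> linear_combination -h

end Stmt8
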